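/- Let E be a normed vector space and T : E → E a map such that ‖Tψ₁ − Tψ₂‖ ≤ K‖ψ₁ − ψ₂‖^β for all ψ₁, ψ₂ ∈ E, where K ≥ 0 and β ∈ (0,1). Then for every integer n ≥ 1 and all ψ₁, ψ₂ ∈ E, ‖Tⁿψ₁ − Tⁿψ₂‖ ≤ (1+K)^{1/(1−β)} ‖ψ₁ − ψ₂‖^{βⁿ}. (Display (lem:fpiter:2) in the proof of Lemma C.1: uniform Hölder bound on the iterates of a β-Hölder map, established by induction.) -/

import Mathlib

/-- Display (lem:fpiter:2) in the proof of Lemma C.1: if `T` is `β`-Hölder with constant `K`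
on a normed vector space (`K ≥ 0`, `β ∈ (0,1)`), then for every `n ≥ 1`,
`‖Tⁿψ₁ − Tⁿψ₂‖ ≤ (1+K)^{1/(1−β)} ‖ψ₁ − ψ₂‖^{βⁿ}`. -/
theorem stmt_10 {E : Type*} [NormedAddCommGroup E] [NormedSpace ℝ E]
    (T : E → E) (K β : ℝ) (hK : 0 ≤ K) (hβ0 : 0 < β) (hβ1 : β < 1)
    (hHolder : ∀ ψ₁ ψ₂ : E, ‖T ψ₁ - T ψ₂‖ ≤ K * ‖ψ₁ - ψ₂‖ ^ β) :
    ∀ n : ℕ, 1 ≤ n → ∀ ψ₁ ψ₂ : E,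
      ‖T^[n] ψ₁ - T^[n] ψ₂‖ ≤ (1 + K) ^ ((1 : ℝ) / (1 - β)) * ‖ψ₁ - ψ₂‖ ^ (β ^ n) := by
  have h1β : 0 < 1 - β := by linarith
  have h1K0 : (0:ℝ) < 1 + K := by linarith
  have h1K : (1:ℝ) ≤ 1 + K := by linarith
  set C : ℝ := (1 + K) ^ ((1:ℝ) / (1 - β)) with hC
  have hCpos : 0 < C := Real.rpow_pos_of_pos h1K0 _
  have hCb : C ^ β = (1 + K) ^ (β / (1 - β)) := by
    rw [hC, ← Real.rpow_mul h1K0.le]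
    ring_nf
  have hKC : K * C ^ β ≤ C := by
    rw [hCb, hC]
    calc K * (1 + K) ^ (β / (1 - β))
        ≤ (1 + K) * (1 + K) ^ (β / (1 - β)) := by
          apply mul_le_mul_of_nonneg_right (by linarith)
            (Real.rpow_pos_of_pos h1K0 _).le
      _ = (1 + K) ^ ((1:ℝ) + β / (1 - β)) := by
          rw [Real.rpow_add h1K0, Real.rpow_one]
      _ = (1 + K) ^ ((1:ℝ) / (1 - β)) := by
          congr 1
          field_simp
          ring
  intro n hn
  induction n, hn using Nat.le_induction with
  | base =>
    intro ψ₁ ψ₂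
    simp only [Function.iterate_one, pow_one]
    calc ‖T ψ₁ - T ψ₂‖ ≤ K * ‖ψ₁ - ψ₂‖ ^ β := hHolder ψ₁ ψ₂
      _ ≤ C * ‖ψ₁ - ψ₂‖ ^ β := by
          apply mul_le_mul_of_nonneg_right _ (Real.rpow_nonneg (norm_nonneg _) _)
          calc K ≤ 1 + K := by linarith
            _ = (1 + K) ^ (1:ℝ) := (Real.rpow_one _).symm
            _ ≤ C := Real.rpow_le_rpow_of_exponent_le h1K
                (by rw [le_div_iff₀ h1β]; nlinarith)
  | succ n hn ih =>
    intro ψ₁ ψ₂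
    have key := ih ψ₁ ψ₂
    calc ‖T^[n+1] ψ₁ - T^[n+1] ψ₂‖
        = ‖T (T^[n] ψ₁) - T (T^[n] ψ₂)‖ := by
          rw [Function.iterate_succ_apply', Function.iterate_succ_apply']
      _ ≤ K * ‖T^[n] ψ₁ - T^[n] ψ₂‖ ^ β := hHolder _ _
      _ ≤ K * (C * ‖ψ₁ - ψ₂‖ ^ (β ^ n)) ^ β := by
          apply mul_le_mul_of_nonneg_left _ hK
          exact Real.rpow_le_rpow (norm_nonneg _) key hβ0.le
      _ = (K * C ^ β) * (‖ψ₁ - ψ₂‖ ^ (β ^ n)) ^ β := by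
          rw [Real.mul_rpow hCpos.le (Real.rpow_nonneg (norm_nonneg _) _)]
          ring
      _ = (K * C ^ β) * ‖ψ₁ - ψ₂‖ ^ (β ^ (n+1)) := by
          rw [← Real.rpow_mul (norm_nonneg _), ← pow_succ]
      _ ≤ C * ‖ψ₁ - ψ₂‖ ^ (β ^ (n+1)) :=
          mul_le_mul_of_nonneg_right hKC (Real.rpow_nonneg (norm_nonneg _) _)
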